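/- Let ν₁ ≥ ν₂ ≥ ... ≥ ν₁₀ ≥ 0 and μ₁, ..., μ₁₀ ≥ 0 be real numbers with ∑μᵢ + ∑νⱼ = x and each μᵢ ≤ x/10. Suppose no sub-sum σ = ∑_{i∈I}μᵢ + ∑_{j∈J}νⱼ (over subsets I, J ⊆ {1,...,10}) lies in the interval [x/6 - ε, x/3 + ε], where 0 < ε < x/12. Then ν₁ + ν₂ ≥ 5x/6 + ε. -/

import Mathlib

open Finset

/-- Combinatorial lemma from the Heath–Brown identity optimization: if no
sub-sum of the `μᵢ, νⱼ` lies in `[x/6 - ε, x/3 + ε]`, then `ν₁ + ν₂ ≥ 5x/6 + ε`. -/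
theorem stmt_17 (x ε : ℝ) (hε0 : 0 < ε) (hε : ε < x / 12)
    (μ ν : Fin 10 → ℝ)
    (hμ0 : ∀ i, 0 ≤ μ i) (hν0 : ∀ j, 0 ≤ ν j)
    (hνmono : ∀ i j : Fin 10, i ≤ j → ν j ≤ ν i)
    (hμ : ∀ i, μ i ≤ x / 10)
    (hsum : ∑ i, μ i + ∑ j, ν j = x)
    (hnosub : ∀ I J : Finset (Fin 10),
      (∑ i ∈ I, μ i + ∑ j ∈ J, ν j) ∉ Set.Icc (x / 6 - ε) (x / 3 + ε)) :
    5 * x / 6 + ε ≤ ν 0 + ν 1 := by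
  have hx : 0 < x := by linarith
  -- key: sums of small parts stay small
  have key : ∀ n (I J : Finset (Fin 10)), I.card + J.card = n →
      (∀ i ∈ I, μ i < x/6 - ε) → (∀ j ∈ J, ν j < x/6 - ε) →
      ∑ i ∈ I, μ i + ∑ j ∈ J, ν j < x/6 - ε := by
    intro n
    induction n using Nat.strong_induction_on with
    | _ n ih =>
      intro I J hn hI hJ
      rcases I.eq_empty_or_nonempty with rfl | ⟨i, hi⟩
      · rcases J.eq_empty_or_nonempty with rfl | ⟨j, hj⟩
        · simp; linarith
        · have hcard : (J.erase j).card + 1 = J.card := Finset.card_erase_add_one hj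
          have hrest : ∑ i ∈ (∅ : Finset (Fin 10)), μ i + ∑ k ∈ J.erase j, ν k
              < x/6 - ε := by
            refine ih ((J.erase j).card) (by omega) _ _ (by simp) (by simp)
              (fun k hk => hJ k (Finset.mem_of_mem_erase hk))
          have hsplit : ∑ k ∈ J.erase j, ν k + ν j = ∑ k ∈ J, ν k :=
            Finset.sum_erase_add _ _ hj
          have hνj := hJ j hj
          have hle : ∑ i ∈ (∅ : Finset (Fin 10)), μ i + ∑ k ∈ J, ν k ≤ x/3 + ε := by
            simp only [Finset.sum_empty, zero_add] at hrest ⊢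
            linarith
          have hns := hnosub ∅ J
          rw [Set.mem_Icc] at hns
          push_neg at hns
          by_contra hc
          push_neg at hc
          exact absurd (hns hc) (not_lt.mpr hle)
      · have hcard : (I.erase i).card + 1 = I.card := Finset.card_erase_add_one hi
        have hrest : ∑ k ∈ I.erase i, μ k + ∑ k ∈ J, ν k < x/6 - ε := by
          refine ih ((I.erase i).card + J.card) (by omega) _ _ rfl
            (fun k hk => hI k (Finset.mem_of_mem_erase hk)) hJ
        have hsplit : ∑ k ∈ I.erase i, μ k + μ i = ∑ k ∈ I, μ k :=
          Finset.sum_erase_add _ _ hi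
        have hμi := hI i hi
        have hle : ∑ k ∈ I, μ k + ∑ k ∈ J, ν k ≤ x/3 + ε := by linarith
        have hns := hnosub I J
        rw [Set.mem_Icc] at hns
        push_neg at hns
        by_contra hc
        push_neg at hc
        exact absurd (hns hc) (not_lt.mpr hle)
  -- each μ i is small
  have hμsmall : ∀ i, μ i < x/6 - ε := by
    intro i
    have h := hnosub {i} ∅
    rw [Set.mem_Icc] at h
    push_neg at h
    have hle : ∑ k ∈ ({i} : Finset (Fin 10)), μ k + ∑ j ∈ (∅ : Finset (Fin 10)), ν j
        ≤ x/3 + ε := by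
      simp only [Finset.sum_singleton, Finset.sum_empty, add_zero]
      have := hμ i; linarith
    by_contra hc
    push_neg at hc
    have hge : x/6 - ε ≤ ∑ k ∈ ({i} : Finset (Fin 10)), μ k
        + ∑ j ∈ (∅ : Finset (Fin 10)), ν j := by
      simp only [Finset.sum_singleton, Finset.sum_empty, add_zero]
      exact hc
    exact absurd (h hge) (not_lt.mpr hle)
  -- total ν sum is at most x
  have hνle : ∑ j, ν j ≤ x := by
    have : 0 ≤ ∑ i, μ i := Finset.sum_nonneg fun i _ => hμ0 i
    linarith
  -- each ν j with j ∉ {0,1} is small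
  have hνsmall : ∀ j : Fin 10, j ∉ ({0, 1} : Finset (Fin 10)) → ν j < x/6 - ε := by
    intro j hj
    by_contra hbig
    push_neg at hbig
    have h := hnosub ∅ {j}
    rw [Set.mem_Icc] at h
    push_neg at h
    simp only [Finset.sum_empty, Finset.sum_singleton, zero_add] at h
    have hgt : x/3 + ε < ν j := h hbig
    have h0 : x/3 + ε < ν 0 := lt_of_lt_of_le hgt (hνmono 0 j (Fin.zero_le j))
    have h1 : x/3 + ε < ν 1 := by
      refine lt_of_lt_of_le hgt (hνmono 1 j ?_)
      simp only [Finset.mem_insert, Finset.mem_singleton] at hj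
      push_neg at hj
      obtain ⟨hj0, hj1⟩ := hj
      omega
    have hsub : ({0, 1, j} : Finset (Fin 10)) ⊆ Finset.univ := Finset.subset_univ _
    have hjm : j ∉ ({0, 1} : Finset (Fin 10)) := hj
    simp only [Finset.mem_insert, Finset.mem_singleton] at hjm
    push_neg at hjm
    have hm1 : (1 : Fin 10) ∉ ({j} : Finset (Fin 10)) := by
      simp [Ne.symm hjm.2]
    have hm0 : (0 : Fin 10) ∉ insert 1 ({j} : Finset (Fin 10)) := by
      simp only [Finset.mem_insert, Finset.mem_singleton]
      push_neg
      exact ⟨by decide, Ne.symm hjm.1⟩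
    have hsum3 : ∑ k ∈ ({0, 1, j} : Finset (Fin 10)), ν k = ν 0 + ν 1 + ν j := by
      rw [show ({0, 1, j} : Finset (Fin 10)) = insert 0 (insert 1 {j}) from rfl,
        Finset.sum_insert hm0, Finset.sum_insert hm1, Finset.sum_singleton]
      ring
    have hle3 : ∑ k ∈ ({0, 1, j} : Finset (Fin 10)), ν k ≤ ∑ k, ν k :=
      Finset.sum_le_sum_of_subset_of_nonneg hsub (fun k _ _ => hν0 k)
    rw [hsum3] at hle3
    linarith
  -- apply key with all μ and the small ν's
  have hmain := key (Finset.univ.card + ({0,1} : Finset (Fin 10))ᶜ.card)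
    Finset.univ ({0,1} : Finset (Fin 10))ᶜ rfl
    (fun i _ => hμsmall i)
    (fun j hj => hνsmall j (Finset.mem_compl.mp hj))
  have hdecomp : ∑ j ∈ ({0,1} : Finset (Fin 10)), ν j
      + ∑ j ∈ ({0,1} : Finset (Fin 10))ᶜ, ν j = ∑ j, ν j :=
    Finset.sum_add_sum_compl _ _
  have hpair : ∑ j ∈ ({0,1} : Finset (Fin 10)), ν j = ν 0 + ν 1 := by
    rw [Finset.sum_pair (by decide)]
  linarith
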